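/- Let f : 2^N → ℝ be monotone and submodular, let each element of N have a positive cost, and let γ > 1. Let π be a permutation of N that has no swaps and no γ-moves with respect to the weighted coverage mff_π. Then for all indices i, j with I_{π,ψ}(π_i, ψ_j) > 0, one has mff_π(π_i) > f(ψ_j | π_{1:i−1}) / (γ · c(ψ_j)²). -/

import Mathlib

open Finset

/-- The marginal value `f(A | C) := f(A ∪ C) - f(C)` of a set function. -/
def margS {V : Type*} [DecidableEq V] (f : Finset V → ℝ) (A C : Finset V) : ℝ :=
  f (A ∪ C) - f C

/-- The marginal value `f(u | C) := f({u} ∪ C) - f C`. -/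
def marg {V : Type*} [DecidableEq V] (f : Finset V → ℝ) (u : V) (C : Finset V) : ℝ :=
  f (insert u C) - f C

/-- The conditional mutual coverage `I_f(A; B | C) := f(A|C) + f(B|C) - f(A ∪ B | C)`. -/
def mutcov {V : Type*} [DecidableEq V] (f : Finset V → ℝ) (A B C : Finset V) : ℝ :=
  margS f A C + margS f B C - margS f (A ∪ B) C

/-- The prefix `π_{1:i}` of a permutation `π` (0-indexed: the set of the first `i` elements). -/
def pref {V : Type*} [DecidableEq V] {n : ℕ} (π : Fin n → V) (i : ℕ) : Finset V :=
  (Finset.univ.filter fun j : Fin n => (j : ℕ) < i).image π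

/-- The `(i,j)` mutual affinity of the pair of permutations `(α, β)`:
`I_{α,β}(α_i, β_j) := I_f(α_i; β_j | α_{1:i−1} ∪ β_{1:j−1})`. -/
def mfI {V : Type*} [DecidableEq V] {n : ℕ} (f : Finset V → ℝ) (a b : Fin n → V)
    (i j : Fin n) : ℝ :=
  mutcov f {a i} {b j} (pref a i ∪ pref b j)

/-- The weighted coverage `mff_π(π_i) := ∑_j I_{π,ψ}(π_i, ψ_j) / (c(π_i)·c(ψ_j))`. -/
noncomputable def mffw {V : Type*} [Fintype V] [DecidableEq V] {n : ℕ} (f : Finset V → ℝ) (c : V → ℝ)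
    (π ψ : Fin n → V) (i : Fin n) : ℝ :=
  ∑ j : Fin n, mfI f π ψ i j / (c (π i) * c (ψ j))

/-- The weighted coverage that the element `π_q` would have after being moved to position
`p`, i.e. `mff_{π′}(π′_p)` where `π′` is obtained from `π` by moving `π_q` to position `p`
(the prefix of `π′` at position `p` is `π_{1:p−1}`). -/
noncomputable def mffwMove {V : Type*} [Fintype V] [DecidableEq V] {n : ℕ} (f : Finset V → ℝ) (c : V → ℝ)
    (π ψ : Fin n → V) (p q : Fin n) : ℝ :=
  ∑ j : Fin n, mutcov f {π q} {ψ j} (pref π p ∪ pref ψ j) / (c (π q) * c (ψ j))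

open Finset

section Aux
variable {V : Type*} [DecidableEq V] {f : Finset V → ℝ}

lemma margS_nonneg (hmono : ∀ A B : Finset V, A ⊆ B → f A ≤ f B) (A C : Finset V) :
    0 ≤ margS f A C := by
  have := hmono C (A ∪ C) subset_union_right
  unfold margS; linarith

lemma margS_anti (hmono : ∀ A B : Finset V, A ⊆ B → f A ≤ f B)
    (hsub : ∀ A B : Finset V, f (A ∪ B) + f (A ∩ B) ≤ f A + f B)
    (A : Finset V) {C D : Finset V} (h : C ⊆ D) : margS f A D ≤ margS f A C := by
  have h1 := hsub (A ∪ C) D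
  have h2 : f C ≤ f ((A ∪ C) ∩ D) := hmono _ _ (subset_inter subset_union_right h)
  have h3 : A ∪ C ∪ D = A ∪ D := by rw [union_assoc, union_eq_right.mpr h]
  rw [h3] at h1
  unfold margS; linarith

lemma mutcov_nonneg (hmono : ∀ A B : Finset V, A ⊆ B → f A ≤ f B)
    (hsub : ∀ A B : Finset V, f (A ∪ B) + f (A ∩ B) ≤ f A + f B)
    (A B C : Finset V) : 0 ≤ mutcov f A B C := by
  have h1 := hsub (A ∪ C) (B ∪ C)
  have h2 : f C ≤ f ((A ∪ C) ∩ (B ∪ C)) :=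
    hmono _ _ (subset_inter subset_union_right subset_union_right)
  have h3 : A ∪ C ∪ (B ∪ C) = A ∪ B ∪ C := by
    ext x; simp; tauto
  rw [h3] at h1
  unfold mutcov margS; linarith

lemma mutcov_le_margS (hmono : ∀ A B : Finset V, A ⊆ B → f A ≤ f B)
    (A B C : Finset V) : mutcov f A B C ≤ margS f B C := by
  have : f (A ∪ C) ≤ f (A ∪ B ∪ C) := by
    apply hmono; intro x hx; simp at hx ⊢; tauto
  unfold mutcov margS; linarith

lemma mem_pref {n : ℕ} {a : Fin n → V} {x : V} {i : ℕ} :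
    x ∈ pref a i ↔ ∃ k : Fin n, (k : ℕ) < i ∧ a k = x := by
  simp [pref]

lemma pref_zero {n : ℕ} (a : Fin n → V) : pref a 0 = ∅ := by
  simp [pref]

lemma pref_succ {n : ℕ} (a : Fin n → V) {i : ℕ} (h : i < n) :
    pref a (i + 1) = insert (a ⟨i, h⟩) (pref a i) := by
  ext x
  simp only [mem_pref, mem_insert]
  constructor
  · rintro ⟨k, hk, rfl⟩
    rcases Nat.lt_succ_iff_lt_or_eq.mp hk with hk' | hk'
    · exact Or.inr ⟨k, hk', rfl⟩
    · left; congr 1; exact Fin.ext hk'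
  · rintro (rfl | ⟨k, hk, rfl⟩)
    · exact ⟨⟨i, h⟩, Nat.lt_succ_self i, rfl⟩
    · exact ⟨k, Nat.lt_succ_of_lt hk, rfl⟩

lemma pref_subset {n : ℕ} (a : Fin n → V) {i i' : ℕ} (h : i ≤ i') :
    pref a i ⊆ pref a i' := by
  intro x hx
  rw [mem_pref] at hx ⊢
  obtain ⟨k, hk, hkx⟩ := hx
  exact ⟨k, lt_of_lt_of_le hk h, hkx⟩

end Aux


lemma key_move {V : Type*} [Fintype V] [DecidableEq V] {f : Finset V → ℝ}
    (hmono : ∀ A B : Finset V, A ⊆ B → f A ≤ f B)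
    (hsub : ∀ A B : Finset V, f (A ∪ B) + f (A ∩ B) ≤ f A + f B)
    (c : V → ℝ) (hc : ∀ u : V, 0 < c u)
    {n : ℕ} (π ψ : Fin n → V)
    (hψ : ∀ j j' : Fin n, j ≤ j' → c (ψ j) ≤ c (ψ j'))
    (p q j : Fin n) (hq : π q = ψ j) :
    marg f (ψ j) (pref π (p : ℕ)) / (c (ψ j) * c (ψ j)) ≤ mffwMove f c π ψ p q := by
  set u := ψ j with hu
  set P := pref π (p : ℕ) with hP
  set T : ℕ → ℝ := fun k => f (insert u (P ∪ pref ψ k)) - f (P ∪ pref ψ k) with hT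
  have step1 : ∀ j' : Fin n,
      mutcov f {u} {ψ j'} (P ∪ pref ψ (j' : ℕ)) = T (j' : ℕ) - T ((j' : ℕ) + 1) := by
    intro j'
    have h1 : pref ψ ((j' : ℕ) + 1) = insert (ψ j') (pref ψ (j' : ℕ)) := by
      rw [pref_succ ψ j'.isLt]
    simp only [mutcov, margS, hT, h1, ← Finset.insert_eq, insert_union, union_insert]
    ring
  have hIic : Finset.Iic (j : ℕ) = Finset.range ((j : ℕ) + 1) := by
    ext k; simp [Nat.lt_succ_iff]
  have step2 : ∑ j' ∈ Iic j, mutcov f {u} {ψ j'} (P ∪ pref ψ (j' : ℕ))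
      = T 0 - T ((j : ℕ) + 1) := by
    calc ∑ j' ∈ Iic j, mutcov f {u} {ψ j'} (P ∪ pref ψ (j' : ℕ))
        = ∑ j' ∈ Iic j, (T (j' : ℕ) - T ((j' : ℕ) + 1)) :=
          Finset.sum_congr rfl fun j' _ => step1 j'
      _ = ∑ k ∈ Finset.range ((j : ℕ) + 1), (T k - T (k + 1)) := by
          conv_rhs => rw [← hIic, ← Fin.map_valEmbedding_Iic, Finset.sum_map]
          rfl
      _ = T 0 - T ((j : ℕ) + 1) := Finset.sum_range_sub' T _
  have step3 : T ((j : ℕ) + 1) = 0 := by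
    have hmem : u ∈ pref ψ ((j : ℕ) + 1) := mem_pref.mpr ⟨j, Nat.lt_succ_self _, rfl⟩
    have : insert u (P ∪ pref ψ ((j : ℕ) + 1)) = P ∪ pref ψ ((j : ℕ) + 1) :=
      insert_eq_self.mpr (mem_union_right _ hmem)
    simp [hT, this]
  have step4 : T 0 = marg f u P := by
    simp [hT, pref_zero, marg]
  have hsum : ∑ j' ∈ Iic j, mutcov f {u} {ψ j'} (P ∪ pref ψ (j' : ℕ)) = marg f u P := by
    rw [step2, step3, step4]; ring
  have hcu : 0 < c u := hc u
  have hcj : 0 < c (ψ j) := hc (ψ j)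
  calc marg f u P / (c u * c (ψ j))
      = (∑ j' ∈ Iic j, mutcov f {u} {ψ j'} (P ∪ pref ψ (j' : ℕ))) / (c u * c (ψ j)) := by
        rw [hsum]
    _ = ∑ j' ∈ Iic j, mutcov f {u} {ψ j'} (P ∪ pref ψ (j' : ℕ)) / (c u * c (ψ j)) := by
        rw [Finset.sum_div]
    _ ≤ ∑ j' ∈ Iic j, mutcov f {u} {ψ j'} (P ∪ pref ψ (j' : ℕ)) / (c u * c (ψ j')) := by
        apply Finset.sum_le_sum
        intro j' hj'
        have hle : c (ψ j') ≤ c (ψ j) := hψ j' j (Finset.mem_Iic.mp hj')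
        exact div_le_div_of_nonneg_left (mutcov_nonneg hmono hsub _ _ _)
          (mul_pos hcu (hc (ψ j'))) (mul_le_mul_of_nonneg_left hle hcu.le)
    _ ≤ ∑ j' : Fin n, mutcov f {u} {ψ j'} (P ∪ pref ψ (j' : ℕ)) / (c u * c (ψ j')) := by
        apply Finset.sum_le_sum_of_subset_of_nonneg (Finset.subset_univ _)
        intro k _ _
        exact div_nonneg (mutcov_nonneg hmono hsub _ _ _)
          (mul_pos hcu (hc (ψ k))).le
    _ = mffwMove f c π ψ p q := by
        unfold mffwMove
        rw [hq]

/-- If `π` has no swaps and no `γ`-moves with respect to the weighted coverage `mff_π`, then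
for all `i, j` with positive mutual affinity `I_{π,ψ}(π_i, ψ_j)`, one has
`mff_π(π_i) > f(ψ_j | π_{1:i−1}) / (γ·c(ψ_j)²)`. -/
theorem mffw_lower_bound_of_stable {V : Type*} [Fintype V] [DecidableEq V]
    (f : Finset V → ℝ)
    (hmono : ∀ A B : Finset V, A ⊆ B → f A ≤ f B)
    (hsub : ∀ A B : Finset V, f (A ∪ B) + f (A ∩ B) ≤ f A + f B)
    (c : V → ℝ) (hc : ∀ u : V, 0 < c u)
    (γ : ℝ) (hγ : 1 < γ)
    (π ψ : Fin (Fintype.card V) ≃ V)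
    (hψ : ∀ j j' : Fin (Fintype.card V), j ≤ j' → c (ψ j) ≤ c (ψ j'))
    (hNoSwaps : ∀ i j : Fin (Fintype.card V), i ≤ j → mffw f c π ψ j ≤ mffw f c π ψ i)
    (hNoMoves : ∀ p q : Fin (Fintype.card V), p < q →
      ∃ i : Fin (Fintype.card V), p ≤ i ∧ i < q ∧
        mffwMove f c π ψ p q < γ * mffw f c π ψ i) :
    ∀ i j : Fin (Fintype.card V), 0 < mfI f π ψ i j →
      marg f (ψ j) (pref π (i : ℕ)) / (γ * c (ψ j) ^ 2) < mffw f c π ψ i := by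
  intro i j hpos
  have hcj : 0 < c (ψ j) := hc (ψ j)
  have hγ0 : (0:ℝ) < γ := lt_trans one_pos hγ
  have hnot : ψ j ∉ pref π (i : ℕ) := by
    intro hmem
    have hC : ψ j ∈ pref π (i : ℕ) ∪ pref ψ (j : ℕ) := mem_union_left _ hmem
    have h1 : ({ψ j} : Finset V) ∪ (pref π (i:ℕ) ∪ pref ψ (j:ℕ))
        = pref π (i:ℕ) ∪ pref ψ (j:ℕ) := by
      rw [← Finset.insert_eq, insert_eq_self.mpr hC]
    have h2 : ({π i} : Finset V) ∪ {ψ j} ∪ (pref π (i:ℕ) ∪ pref ψ (j:ℕ))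
        = {π i} ∪ (pref π (i:ℕ) ∪ pref ψ (j:ℕ)) := by
      rw [union_assoc, h1]
    have hz : mfI f π ψ i j = 0 := by
      unfold mfI mutcov margS
      rw [h1, h2]
      ring
    rw [hz] at hpos
    exact lt_irrefl 0 hpos
  set q := π.symm (ψ j) with hqdef
  have hq : π q = ψ j := π.apply_symm_apply (ψ j)
  have hiq : i ≤ q := by
    by_contra h
    push_neg at h
    exact hnot (mem_pref.mpr ⟨q, h, hq⟩)
  have hmarg : 0 < marg f (ψ j) (pref π (i:ℕ)) := by
    have h1 : mfI f π ψ i j ≤ margS f {ψ j} (pref π (i:ℕ) ∪ pref ψ (j:ℕ)) :=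
      mutcov_le_margS hmono _ _ _
    have h2 : margS f {ψ j} (pref π (i:ℕ) ∪ pref ψ (j:ℕ)) ≤ margS f {ψ j} (pref π (i:ℕ)) :=
      margS_anti hmono hsub _ subset_union_left
    have h3 : margS f {ψ j} (pref π (i:ℕ)) = marg f (ψ j) (pref π (i:ℕ)) := by
      rw [margS, marg, ← Finset.insert_eq]
    linarith
  have hkey := key_move hmono hsub c hc π ψ hψ i q j hq
  rcases eq_or_lt_of_le hiq with heq | hlt
  · have hmm : mffwMove f c π ψ i q = mffw f c π ψ i := by
      rw [← heq]
      simp only [mffw, mffwMove, mfI]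
    rw [hmm] at hkey
    have hlt2 : marg f (ψ j) (pref π (i:ℕ)) / (γ * c (ψ j) ^ 2)
        < marg f (ψ j) (pref π (i:ℕ)) / (c (ψ j) * c (ψ j)) := by
      apply div_lt_div_of_pos_left hmarg (by positivity)
      nlinarith [mul_pos hcj hcj]
    linarith
  · obtain ⟨i', hii', hi'q, hmove⟩ := hNoMoves i q hlt
    have h5 : mffw f c π ψ i' ≤ mffw f c π ψ i := hNoSwaps i i' hii'
    have h6 : marg f (ψ j) (pref π (i:ℕ)) / (c (ψ j) * c (ψ j)) < γ * mffw f c π ψ i :=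
      lt_of_le_of_lt hkey (lt_of_lt_of_le hmove (mul_le_mul_of_nonneg_left h5 hγ0.le))
    rw [div_lt_iff₀ (by positivity)]
    rw [div_lt_iff₀ (by positivity : (0:ℝ) < c (ψ j) * c (ψ j))] at h6
    have e : γ * mffw f c π ψ i * (c (ψ j) * c (ψ j))
        = mffw f c π ψ i * (γ * c (ψ j) ^ 2) := by ring
    linarith
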